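/- Let α > 1, c ∈ ℝ, and f ∈ 𝒮(ℝ²) with (∂^k f/∂x^k)(c,y)=0 for k=0,…,m where m ≥ α - 2. Define Q_α f(s,u) = ∫_ℝ f(x+c, s x|x|^{α-1}+u) dx and let X F_α denote the X-ray transform of F_α(ξ,η) = f(sgn(ξ)|ξ|^{1/α}+c,η)/(α|ξ|^{(α-1)/α}). Then Q_α f(s,u) = (1/√(1+s²)) · X F_α(arccot(-s), u/√(1+s²)) for all s, u ∈ ℝ. -/

import Mathlib

open MeasureTheory

noncomputable def phiQ (α : ℝ) (x : ℝ) : ℝ := x * |x| ^ (α - 1)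

lemma signMulAbs (x : ℝ) : Real.sign x * |x| = x := by
  rcases lt_trichotomy x 0 with h | h | h
  · rw [Real.sign_of_neg h, abs_of_neg h]; ring
  · simp [h]
  · rw [Real.sign_of_pos h, abs_of_pos h]; ring

lemma rpow_split {b α : ℝ} (hb : 0 < b) : b ^ α = b * b ^ (α - 1) := by
  have := Real.rpow_add hb 1 (α - 1)
  rw [Real.rpow_one] at this
  rw [← this]; congr 1; ring

lemma abs_phiQ {α : ℝ} (hα : 1 < α) (x : ℝ) : |phiQ α x| = |x| ^ α := by
  rcases eq_or_ne x 0 with rfl | hx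
  · simp [phiQ, Real.zero_rpow (by linarith : α - 1 ≠ 0),
      Real.zero_rpow (by linarith : α ≠ 0)]
  · have h0 : (0:ℝ) < |x| := abs_pos.2 hx
    rw [phiQ, abs_mul, abs_of_nonneg (Real.rpow_nonneg (abs_nonneg x) _), rpow_split (α := α) h0]

lemma sign_phiQ {α : ℝ} (x : ℝ) (hx : x ≠ 0) : Real.sign (phiQ α x) = Real.sign x := by
  have hp : (0:ℝ) < |x| ^ (α - 1) := Real.rpow_pos_of_pos (abs_pos.2 hx) _
  rcases lt_or_gt_of_ne hx with h | h
  · rw [Real.sign_of_neg h, Real.sign_of_neg (by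
      have : x * |x| ^ (α - 1) < 0 := mul_neg_of_neg_of_pos h hp
      simpa [phiQ] using this)]
  · rw [Real.sign_of_pos h, Real.sign_of_pos (by
      have : 0 < x * |x| ^ (α - 1) := mul_pos h hp
      simpa [phiQ] using this)]

lemma phiQ_leftInv {α : ℝ} (hα : 1 < α) (x : ℝ) :
    Real.sign (phiQ α x) * |phiQ α x| ^ (1 / α) = x := by
  rcases eq_or_ne x 0 with rfl | hx
  · simp [phiQ]
  · have hα0 : α ≠ 0 := by linarith
    rw [abs_phiQ hα, sign_phiQ x hx, ← Real.rpow_mul (abs_nonneg x),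
      mul_one_div, div_self hα0, Real.rpow_one, signMulAbs]

lemma phiQ_inj {α : ℝ} (hα : 1 < α) : Function.Injective (phiQ α) :=
  Function.LeftInverse.injective (g := fun ξ => Real.sign ξ * |ξ| ^ (1 / α))
    (phiQ_leftInv hα)

lemma phiQ_surj {α : ℝ} (hα : 1 < α) : Function.Surjective (phiQ α) := by
  intro ξ
  rcases eq_or_ne ξ 0 with rfl | hξ
  · exact ⟨0, by simp [phiQ]⟩
  refine ⟨Real.sign ξ * |ξ| ^ (1 / α), ?_⟩
  have hα0 : α ≠ 0 := by linarith
  have hξ0 : (0:ℝ) < |ξ| := abs_pos.2 hξ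
  have habs : |Real.sign ξ * |ξ| ^ (1 / α)| = |ξ| ^ (1 / α) := by
    rw [abs_mul, abs_of_nonneg (Real.rpow_nonneg (abs_nonneg ξ) _)]
    rcases lt_or_gt_of_ne hξ with h | h
    · rw [Real.sign_of_neg h]; simp
    · rw [Real.sign_of_pos h]; simp
  rw [phiQ, habs, ← Real.rpow_mul (abs_nonneg ξ), mul_assoc,
    ← Real.rpow_add hξ0,
    show 1/α + 1/α * (α - 1) = 1 by field_simp; ring,
    Real.rpow_one, signMulAbs]

lemma phiQ_hasDerivAt {α : ℝ} (hα : 1 < α) (x : ℝ) :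
    HasDerivAt (phiQ α) (α * |x| ^ (α - 1)) x := by
  rcases lt_trichotomy x 0 with h | h | h
  · have h1 : HasDerivAt (fun z : ℝ => z ^ α) (α * (-x) ^ (α - 1)) (-x) :=
      Real.hasDerivAt_rpow_const (Or.inl (by linarith))
    have h2 : HasDerivAt (fun y : ℝ => (-y) ^ α) (α * (-x) ^ (α - 1) * (-1)) x :=
      h1.comp x (hasDerivAt_neg x)
    have h3 : HasDerivAt (fun y : ℝ => -((-y) ^ α)) (α * (-x) ^ (α - 1)) x := by
      have h4 := h2.neg
      simp only [mul_neg, mul_one, neg_neg] at h4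
      exact h4
    have heq : (fun y : ℝ => -((-y) ^ α)) =ᶠ[nhds x] phiQ α := by
      filter_upwards [Iio_mem_nhds h] with y hy
      have hy0 : (0:ℝ) < -y := by simpa using hy
      rw [phiQ, abs_of_neg hy, rpow_split (α := α) hy0]
      ring
    have := h3.congr_of_eventuallyEq heq.symm
    rwa [abs_of_neg h]
  · subst h
    rw [hasDerivAt_iff_tendsto_slope]
    have hval : α * |(0:ℝ)| ^ (α - 1) = 0 := by
      simp [Real.zero_rpow (by linarith : α - 1 ≠ 0)]
    rw [hval]
    have hc : ContinuousAt (fun z : ℝ => z ^ (α - 1)) 0 :=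
      Real.continuousAt_rpow_const 0 (α - 1) (Or.inr (by linarith))
    have h0 : Filter.Tendsto (fun y : ℝ => |y| ^ (α - 1)) (nhds 0) (nhds 0) := by
      have habs : Filter.Tendsto (fun y : ℝ => |y|) (nhds (0:ℝ)) (nhds (0:ℝ)) := by
        simpa using continuous_abs.tendsto (0:ℝ)
      have := hc.tendsto.comp habs
      simpa [Function.comp_def, Real.zero_rpow (by linarith : α - 1 ≠ 0)] using this
    refine Filter.Tendsto.congr' ?_ (h0.mono_left nhdsWithin_le_nhds)
    filter_upwards [self_mem_nhdsWithin] with y hy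
    have hy : y ≠ 0 := hy
    rw [slope_def_field, phiQ]
    simp only [phiQ, Real.zero_rpow (by linarith : α - 1 ≠ 0), mul_zero, zero_mul, sub_zero]
    rw [mul_comm, mul_div_assoc, div_self hy, mul_one]
  · have h1 : HasDerivAt (fun z : ℝ => z ^ α) (α * x ^ (α - 1)) x :=
      Real.hasDerivAt_rpow_const (Or.inl (ne_of_gt h))
    have heq : (fun z : ℝ => z ^ α) =ᶠ[nhds x] phiQ α := by
      filter_upwards [Ioi_mem_nhds h] with y hy
      have hy0 : (0:ℝ) < y := hy
      rw [phiQ, abs_of_pos hy0, rpow_split (α := α) hy0]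
    have := h1.congr_of_eventuallyEq heq.symm
    rwa [abs_of_pos h]


/-- The X-ray transform of `g` over the line `θ, t`. -/
noncomputable def xray (g : ℝ → ℝ → ℝ) (θ t : ℝ) : ℝ :=
  ∫ σ : ℝ, g (t * Real.cos θ - σ * Real.sin θ) (t * Real.sin θ + σ * Real.cos θ)

/-- `arccot (-s)`, taking values in `(0, π)`. -/
noncomputable def arccotNeg (s : ℝ) : ℝ := Real.pi / 2 + Real.arctan s

/-- Reduction of `Q_α` to the X-ray transform of `F_α`. -/
theorem Qalpha_eq_xray (α c : ℝ) (hα : 1 < α) (m : ℕ) (hm : (m : ℝ) ≥ α - 2)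
    (f : SchwartzMap (ℝ × ℝ) ℝ)
    (hvan : ∀ k ≤ m, ∀ y : ℝ, iteratedDeriv k (fun x : ℝ => f (x, y)) c = 0)
    (F : ℝ → ℝ → ℝ)
    (hF : ∀ ξ : ℝ, ξ ≠ 0 → ∀ η : ℝ,
      F ξ η = f (Real.sign ξ * |ξ| ^ (1 / α) + c, η) / (α * |ξ| ^ ((α - 1) / α))) :
    ∀ s u : ℝ,
      (∫ x : ℝ, f (x + c, s * x * |x| ^ (α - 1) + u)) =
        (1 / Real.sqrt (1 + s ^ 2)) * xray F (arccotNeg s) (u / Real.sqrt (1 + s ^ 2)) := by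
  intro s u
  have hα0 : α ≠ 0 := by linarith
  set r : ℝ := Real.sqrt (1 + s ^ 2) with hr_def
  have hr : 0 < r := Real.sqrt_pos.2 (by positivity)
  have hr2 : r ^ 2 = 1 + s ^ 2 := Real.sq_sqrt (by positivity)
  have hcos : Real.cos (arccotNeg s) = -s / r := by
    rw [arccotNeg, Real.cos_add, Real.cos_pi_div_two, Real.sin_pi_div_two, Real.sin_arctan]
    ring
  have hsin : Real.sin (arccotNeg s) = 1 / r := by
    rw [arccotNeg, Real.sin_add, Real.cos_pi_div_two, Real.sin_pi_div_two, Real.cos_arctan]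
    ring
  set K : ℝ → ℝ := fun ξ => F ξ (s * ξ + u) with hK_def
  -- Step A+B : the xray side equals ∫ K
  have stepAB : xray F (arccotNeg s) (u / r) = r * ∫ ξ : ℝ, K ξ := by
    have hptwise : ∀ σ : ℝ,
        F (u / r * Real.cos (arccotNeg s) - σ * Real.sin (arccotNeg s))
          (u / r * Real.sin (arccotNeg s) + σ * Real.cos (arccotNeg s)) =
        K ((-(1 / r)) * σ + (u / r) * (-s / r)) := by
      intro σ
      rw [hcos, hsin, hK_def]
      have harg1 : u / r * (-s / r) - σ * (1 / r) = (-(1 / r)) * σ + (u / r) * (-s / r) := by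
        ring
      have harg2 : u / r * (1 / r) + σ * (-s / r)
          = s * ((-(1 / r)) * σ + (u / r) * (-s / r)) + u := by
        have hrr : r * r = 1 + s ^ 2 := by nlinarith [hr2]
        have hinv : (r ^ 2)⁻¹ * (1 + s ^ 2) = 1 := by
          rw [← hr2]; exact inv_mul_cancel₀ (by positivity)
        linear_combination u * hinv
      rw [harg1, harg2]
    have hsub : (∫ σ : ℝ, K ((-(1 / r)) * σ + (u / r) * (-s / r))) = r * ∫ ξ : ℝ, K ξ := by
      have h1 := MeasureTheory.Measure.integral_comp_mul_left
        (fun y => K (y + (u / r) * (-s / r))) (-(1 / r))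
      have h2 := MeasureTheory.integral_add_right_eq_self (μ := volume) K ((u / r) * (-s / r))
      rw [h1, h2]
      rw [smul_eq_mul]
      congr 1
      rw [abs_inv, abs_neg, abs_of_pos (by positivity : (0:ℝ) < 1 / r)]
      field_simp
    rw [xray]
    simp_rw [hptwise]
    exact hsub
  -- Step C : ∫ K equals the left-hand side via the change of variables φ
  have stepC : (∫ ξ : ℝ, K ξ) = ∫ x : ℝ, f (x + c, s * x * |x| ^ (α - 1) + u) := by
    have hcov := MeasureTheory.integral_image_eq_integral_abs_deriv_smul
      (MeasurableSet.univ) (f := phiQ α) (f' := fun x => α * |x| ^ (α - 1))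
      (fun x _ => (phiQ_hasDerivAt hα x).hasDerivWithinAt)
      ((phiQ_inj hα).injOn) K
    rw [Set.image_univ, Set.range_eq_univ.2 (phiQ_surj hα)] at hcov
    rw [MeasureTheory.setIntegral_univ, MeasureTheory.setIntegral_univ] at hcov
    rw [hcov]
    apply MeasureTheory.integral_congr_ae
    have hae : ∀ᵐ x : ℝ, x ≠ 0 := by
      rw [MeasureTheory.ae_iff]
      have : {x : ℝ | ¬ x ≠ 0} = {0} := by ext x; simp
      rw [this]
      exact Real.volume_singleton
    filter_upwards [hae] with x hx
    have hφ : phiQ α x ≠ 0 := by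
      intro h
      apply hx
      have := abs_phiQ hα x
      rw [h, abs_zero] at this
      have h2 : |x| = 0 := by
        by_contra h3
        exact absurd this.symm (ne_of_gt (Real.rpow_pos_of_pos (abs_pos.2 (abs_ne_zero.mp h3)) α))
      exact abs_eq_zero.mp h2
    have hden : (0:ℝ) < α * |x| ^ (α - 1) := by
      have : (0:ℝ) < |x| ^ (α - 1) := Real.rpow_pos_of_pos (abs_pos.2 hx) _
      positivity
    rw [hK_def]
    simp only
    rw [hF _ hφ, smul_eq_mul]
    rw [phiQ_leftInv hα x]
    have hpow : |phiQ α x| ^ ((α - 1) / α) = |x| ^ (α - 1) := by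
      rw [abs_phiQ hα, ← Real.rpow_mul (abs_nonneg x)]
      congr 1
      field_simp
    rw [hpow, abs_of_pos hden]
    rw [mul_div_cancel₀ _ (ne_of_gt hden)]
    congr 2
    · rw [phiQ]; ring
  rw [stepAB, stepC.symm] at *
  rw [stepAB]
  field_simp
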